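/- The polytope P_4 (convex hull of (1,1,1,1), (1/2,1/2,1,1), (1/2,1,1/2,1), (1/2,1,1,1/2), (1,1/2,1/2,1), (1,1/2,1,1/2), (1,1,1/2,1/2), (1/2,1/2,1/2,1/2)) equals the set of points λ in the full polytope P_7 (convex hull of P_4's vertices together with (1/2,1/2,1/2,1), (1/2,1/2,1,1/2), (1/2,1,1/2,1/2), (1,1/2,1/2,1/2)) satisfying −λ_i + λ_j + λ_k + λ_l ≥ 1 for all choices of distinct indices {i,j,k,l} = {1,2,3,4}. -/

import Mathlib

private def S4 : Set (Fin 4 → ℝ) :=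
  {![(1:ℝ),1,1,1], ![1/2,1/2,1,1], ![1/2,1,1/2,1], ![1/2,1,1,1/2],
    ![1,1/2,1/2,1], ![1,1/2,1,1/2], ![1,1,1/2,1/2], ![1/2,1/2,1/2,1/2]}

private lemma v8_5 {α : Type*} (a b c d e f g h : α) : ![a,b,c,d,e,f,g,h] 5 = f := rfl
private lemma v8_6 {α : Type*} (a b c d e f g h : α) : ![a,b,c,d,e,f,g,h] 6 = g := rfl
private lemma v8_7 {α : Type*} (a b c d e f g h : α) : ![a,b,c,d,e,f,g,h] 7 = h := rfl

private lemma lemA (x : Fin 4 → ℝ)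
    (h1 : ∀ j : Fin 4, 1/2 ≤ x j) (h2 : ∀ j : Fin 4, x j ≤ 1)
    (h3 : ∀ i : Fin 4, 1 ≤ (x 0 + x 1 + x 2 + x 3) - 2 * x i)
    (h4 : ∀ i : Fin 4, (x 0 + x 1 + x 2 + x 3) - 2 * x i ≤ 2) :
    x ∈ convexHull ℝ S4 := by
  have habs : ∀ a : ℝ, max a 0 + max (-a) 0 = |a| := by
    intro a
    rcases le_total 0 a with h | h
    · rw [max_eq_left h, max_eq_right (by linarith), abs_of_nonneg h]; ring
    · rw [max_eq_right h, max_eq_left (by linarith), abs_of_nonpos h]; ring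
  have hsub : ∀ a : ℝ, max a 0 - max (-a) 0 = a := by
    intro a
    rcases le_total 0 a with h | h
    · rw [max_eq_left h, max_eq_right (by linarith)]; ring
    · rw [max_eq_right h, max_eq_left (by linarith)]; ring
  set c1 := x 0 + x 1 + x 2 + x 3 - 3 with hc1
  set c2 := x 0 + x 1 - x 2 - x 3 with hc2
  set c3 := x 0 - x 1 + x 2 - x 3 with hc3
  set c4 := x 0 - x 1 - x 2 + x 3 with hc4
  have hr : |c1| + |c2| + |c3| + |c4| ≤ 1 := by
    rcases abs_cases c1 with ⟨e1, -⟩ | ⟨e1, -⟩ <;> rcases abs_cases c2 with ⟨e2, -⟩ | ⟨e2, -⟩ <;>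
      rcases abs_cases c3 with ⟨e3, -⟩ | ⟨e3, -⟩ <;> rcases abs_cases c4 with ⟨e4, -⟩ | ⟨e4, -⟩ <;>
      rw [e1, e2, e3, e4] <;>
      linarith [h1 0, h1 1, h1 2, h1 3, h2 0, h2 1, h2 2, h2 3,
        h3 0, h3 1, h3 2, h3 3, h4 0, h4 1, h4 2, h4 3]
  set r := 1 - (|c1| + |c2| + |c3| + |c4|) with hrdef
  have hr0 : 0 ≤ r := by rw [hrdef]; linarith
  set W : Fin 8 → ℝ := ![max c1 0 + r/8, max (-c1) 0 + r/8, max c2 0 + r/8, max (-c2) 0 + r/8,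
    max c3 0 + r/8, max (-c3) 0 + r/8, max c4 0 + r/8, max (-c4) 0 + r/8] with hW
  set Z : Fin 8 → (Fin 4 → ℝ) := ![![1,1,1,1], ![1/2,1/2,1/2,1/2], ![1,1,1/2,1/2], ![1/2,1/2,1,1],
    ![1,1/2,1,1/2], ![1/2,1,1/2,1], ![1,1/2,1/2,1], ![1/2,1,1,1/2]] with hZ
  have hWpos : ∀ i ∈ (Finset.univ : Finset (Fin 8)), 0 ≤ W i := by
    intro i _
    have l1 := le_max_right c1 (0:ℝ); have l2 := le_max_right (-c1) (0:ℝ)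
    have l3 := le_max_right c2 (0:ℝ); have l4 := le_max_right (-c2) (0:ℝ)
    have l5 := le_max_right c3 (0:ℝ); have l6 := le_max_right (-c3) (0:ℝ)
    have l7 := le_max_right c4 (0:ℝ); have l8 := le_max_right (-c4) (0:ℝ)
    fin_cases i
    · show (0:ℝ) ≤ max c1 0 + r/8; linarith
    · show (0:ℝ) ≤ max (-c1) 0 + r/8; linarith
    · show (0:ℝ) ≤ max c2 0 + r/8; linarith
    · show (0:ℝ) ≤ max (-c2) 0 + r/8; linarith
    · show (0:ℝ) ≤ max c3 0 + r/8; linarith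
    · show (0:ℝ) ≤ max (-c3) 0 + r/8; linarith
    · show (0:ℝ) ≤ max c4 0 + r/8; linarith
    · show (0:ℝ) ≤ max (-c4) 0 + r/8; linarith
  have hWsum : ∑ i, W i = 1 := by
    rw [Fin.sum_univ_eight]
    show (max c1 0 + r/8) + (max (-c1) 0 + r/8) + (max c2 0 + r/8) + (max (-c2) 0 + r/8)
      + (max c3 0 + r/8) + (max (-c3) 0 + r/8) + (max c4 0 + r/8) + (max (-c4) 0 + r/8) = 1
    have := habs c1; have := habs c2; have := habs c3; have := habs c4
    rw [hrdef]; linarith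
  have hZmem : ∀ i ∈ (Finset.univ : Finset (Fin 8)), Z i ∈ convexHull ℝ S4 := by
    intro i _
    apply subset_convexHull ℝ S4
    fin_cases i
    · exact Set.mem_insert _ _
    · exact Set.mem_insert_of_mem _ <| Set.mem_insert_of_mem _ <| Set.mem_insert_of_mem _ <|
        Set.mem_insert_of_mem _ <| Set.mem_insert_of_mem _ <| Set.mem_insert_of_mem _ <|
        Set.mem_insert_of_mem _ <| Set.mem_singleton _
    · exact Set.mem_insert_of_mem _ <| Set.mem_insert_of_mem _ <| Set.mem_insert_of_mem _ <|
        Set.mem_insert_of_mem _ <| Set.mem_insert_of_mem _ <| Set.mem_insert_of_mem _ <|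
        Set.mem_insert _ _
    · exact Set.mem_insert_of_mem _ <| Set.mem_insert _ _
    · exact Set.mem_insert_of_mem _ <| Set.mem_insert_of_mem _ <| Set.mem_insert_of_mem _ <|
        Set.mem_insert_of_mem _ <| Set.mem_insert_of_mem _ <| Set.mem_insert _ _
    · exact Set.mem_insert_of_mem _ <| Set.mem_insert_of_mem _ <| Set.mem_insert _ _
    · exact Set.mem_insert_of_mem _ <| Set.mem_insert_of_mem _ <| Set.mem_insert_of_mem _ <|
        Set.mem_insert_of_mem _ <| Set.mem_insert _ _
    · exact Set.mem_insert_of_mem _ <| Set.mem_insert_of_mem _ <| Set.mem_insert_of_mem _ <|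
        Set.mem_insert _ _
  have hmem := (convex_convexHull ℝ S4).sum_mem hWpos hWsum hZmem
  have hx : ∑ i, W i • Z i = x := by
    rw [Fin.sum_univ_eight]
    funext j
    have e1 := hsub c1; have e2 := hsub c2; have e3 := hsub c3; have e4 := hsub c4
    fin_cases j
    · show (max c1 0 + r/8) * 1 + (max (-c1) 0 + r/8) * (1/2) + (max c2 0 + r/8) * 1
        + (max (-c2) 0 + r/8) * (1/2) + (max c3 0 + r/8) * 1 + (max (-c3) 0 + r/8) * (1/2)
        + (max c4 0 + r/8) * 1 + (max (-c4) 0 + r/8) * (1/2) = x 0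
      have := habs c1; have := habs c2; have := habs c3; have := habs c4
      rw [hrdef]; linarith
    · show (max c1 0 + r/8) * 1 + (max (-c1) 0 + r/8) * (1/2) + (max c2 0 + r/8) * 1
        + (max (-c2) 0 + r/8) * (1/2) + (max c3 0 + r/8) * (1/2) + (max (-c3) 0 + r/8) * 1
        + (max c4 0 + r/8) * (1/2) + (max (-c4) 0 + r/8) * 1 = x 1
      have := habs c1; have := habs c2; have := habs c3; have := habs c4
      rw [hrdef]; linarith
    · show (max c1 0 + r/8) * 1 + (max (-c1) 0 + r/8) * (1/2) + (max c2 0 + r/8) * (1/2)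
        + (max (-c2) 0 + r/8) * 1 + (max c3 0 + r/8) * 1 + (max (-c3) 0 + r/8) * (1/2)
        + (max c4 0 + r/8) * (1/2) + (max (-c4) 0 + r/8) * 1 = x 2
      have := habs c1; have := habs c2; have := habs c3; have := habs c4
      rw [hrdef]; linarith
    · show (max c1 0 + r/8) * 1 + (max (-c1) 0 + r/8) * (1/2) + (max c2 0 + r/8) * (1/2)
        + (max (-c2) 0 + r/8) * 1 + (max c3 0 + r/8) * (1/2) + (max (-c3) 0 + r/8) * 1
        + (max c4 0 + r/8) * 1 + (max (-c4) 0 + r/8) * (1/2) = x 3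
      have := habs c1; have := habs c2; have := habs c3; have := habs c4
      rw [hrdef]; linarith
  rwa [hx] at hmem

private lemma hull_sub_ineq :
    convexHull ℝ S4 ⊆ {y : Fin 4 → ℝ | ∀ i : Fin 4, 1 ≤ (y 0 + y 1 + y 2 + y 3) - 2 * y i} := by
  apply convexHull_min
  · intro y hy
    simp only [S4, Set.mem_insert_iff, Set.mem_singleton_iff] at hy
    rcases hy with rfl | rfl | rfl | rfl | rfl | rfl | rfl | rfl <;>
      · intro i; fin_cases i <;> norm_num [Matrix.cons_val_two, Matrix.cons_val_three]
  · intro y hy z hz a b ha hb hab i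
    simp only [Set.mem_setOf_eq] at hy hz ⊢
    simp only [Pi.add_apply, Pi.smul_apply, smul_eq_mul]
    linarith [mul_le_mul_of_nonneg_left (hy i) ha, mul_le_mul_of_nonneg_left (hz i) hb]

private def S12 : Set (Fin 4 → ℝ) :=
  {![(1:ℝ),1,1,1], ![1/2,1/2,1,1], ![1/2,1,1/2,1], ![1/2,1,1,1/2],
    ![1,1/2,1/2,1], ![1,1/2,1,1/2], ![1,1,1/2,1/2], ![1/2,1/2,1/2,1/2],
    ![1/2,1/2,1/2,1], ![1/2,1/2,1,1/2], ![1/2,1,1/2,1/2], ![1,1/2,1/2,1/2]}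

private lemma hull12_sub :
    convexHull ℝ S12 ⊆
      {y : Fin 4 → ℝ | ∀ j : Fin 4,
        (1/2 ≤ y j ∧ y j ≤ 1) ∧ (y 0 + y 1 + y 2 + y 3) - 2 * y j ≤ 2} := by
  apply convexHull_min
  · intro y hy
    simp only [S12, Set.mem_insert_iff, Set.mem_singleton_iff] at hy
    rcases hy with rfl | rfl | rfl | rfl | rfl | rfl | rfl | rfl | rfl | rfl | rfl | rfl <;>
      · intro j; fin_cases j <;> norm_num [Matrix.cons_val_two, Matrix.cons_val_three]
  · intro y hy z hz a b ha hb hab j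
    simp only [Set.mem_setOf_eq] at hy hz ⊢
    simp only [Pi.add_apply, Pi.smul_apply, smul_eq_mul]
    refine ⟨⟨?_, ?_⟩, ?_⟩
    · linarith [mul_le_mul_of_nonneg_left (hy j).1.1 ha, mul_le_mul_of_nonneg_left (hz j).1.1 hb]
    · linarith [mul_le_mul_of_nonneg_left (hy j).1.2 ha, mul_le_mul_of_nonneg_left (hz j).1.2 hb]
    · linarith [mul_le_mul_of_nonneg_left (hy j).2 ha, mul_le_mul_of_nonneg_left (hz j).2 hb]

theorem P4_eq_P7_inter_halfspaces :
    convexHull ℝ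
        ({![(1:ℝ),1,1,1], ![1/2,1/2,1,1], ![1/2,1,1/2,1], ![1/2,1,1,1/2],
           ![1,1/2,1/2,1], ![1,1/2,1,1/2], ![1,1,1/2,1/2], ![1/2,1/2,1/2,1/2]} :
          Set (Fin 4 → ℝ)) =
      {x : Fin 4 → ℝ |
        x ∈ convexHull ℝ
          ({![(1:ℝ),1,1,1], ![1/2,1/2,1,1], ![1/2,1,1/2,1], ![1/2,1,1,1/2],
             ![1,1/2,1/2,1], ![1,1/2,1,1/2], ![1,1,1/2,1/2], ![1/2,1/2,1/2,1/2],
             ![1/2,1/2,1/2,1], ![1/2,1/2,1,1/2], ![1/2,1,1/2,1/2], ![1,1/2,1/2,1/2]} :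
            Set (Fin 4 → ℝ)) ∧
        ∀ i : Fin 4, 1 ≤ (x 0 + x 1 + x 2 + x 3) - 2 * x i} := by
  ext x
  simp only [Set.mem_setOf_eq]
  constructor
  · intro hx
    have hx' : x ∈ convexHull ℝ S4 := hx
    constructor
    · refine convexHull_mono ?_ hx'
      intro y hy
      simp only [S4, Set.mem_insert_iff, Set.mem_singleton_iff] at hy
      simp only [Set.mem_insert_iff, Set.mem_singleton_iff]
      tauto
    · exact hull_sub_ineq hx'
  · rintro ⟨hmem, hineq⟩
    have hC := hull12_sub hmem
    exact lemA x (fun j => (hC j).1.1) (fun j => (hC j).1.2) hineq (fun i => (hC i).2)
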